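/- Let A be a unital associative algebra containing elements q and p with [q,p] = iℏ·1, ℏ ≠ 0. Then every submultiplicative seminorm on A is identically zero. -/
import Mathlib


/-- If a unital associative ℂ-algebra contains `q`, `p` with `[q,p] = iℏ·1`, `ℏ ≠ 0`,
then every submultiplicative seminorm on it is identically zero. -/
theorem stmt1 {A : Type*} [Ring A] [Algebra ℂ A] (q p : A) (ℏ : ℝ) (hℏ : ℏ ≠ 0)
    (hcc : q * p - p * q = (Complex.I * (ℏ : ℂ)) • (1 : A))
    (N : Seminorm ℂ A) (hmul : ∀ a b : A, N (a * b) ≤ N a * N b) :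
    ∀ a : A, N a = 0 := by
  set c : ℂ := Complex.I * (ℏ : ℂ) with hc
  -- key commutator identity
  have key : ∀ n : ℕ, q * p ^ (n + 1) - p ^ (n + 1) * q = (((n : ℂ) + 1) * c) • p ^ n := by
    intro n
    induction n with
    | zero => simpa using hcc
    | succ n ih =>
      have : q * p ^ (n + 2) - p ^ (n + 2) * q
          = (q * p ^ (n + 1) - p ^ (n + 1) * q) * p + p ^ (n + 1) * (q * p - p * q) := by
        rw [pow_succ]; noncomm_ring
      rw [this, ih, hcc, smul_mul_assoc, mul_smul_comm, mul_one,
        ← pow_succ, ← add_smul]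
      congr 1
      push_cast
      ring
  -- norm estimate
  have est : ∀ n : ℕ, ((n : ℝ) + 1) * |ℏ| * N (p ^ n) ≤ 2 * N q * N (p ^ (n + 1)) := by
    intro n
    have h1 : N ((((n : ℂ) + 1) * c) • p ^ n) = ((n : ℝ) + 1) * |ℏ| * N (p ^ n) := by
      rw [map_smul_eq_mul]
      congr 1
      have h2 : ((n : ℂ) + 1) = ((n + 1 : ℕ) : ℂ) := by push_cast; ring
      rw [norm_mul, h2, Complex.norm_natCast, hc, norm_mul, Complex.norm_I, one_mul,
        Complex.norm_real, Real.norm_eq_abs]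
      push_cast; ring
    calc ((n : ℝ) + 1) * |ℏ| * N (p ^ n) = N (q * p ^ (n + 1) - p ^ (n + 1) * q) := by
          rw [key n, h1]
      _ ≤ N (q * p ^ (n + 1)) + N (p ^ (n + 1) * q) := map_sub_le_add N _ _
      _ ≤ N q * N (p ^ (n + 1)) + N (p ^ (n + 1)) * N q := add_le_add (hmul _ _) (hmul _ _)
      _ = 2 * N q * N (p ^ (n + 1)) := by ring
  have hℏpos : (0 : ℝ) < |ℏ| := abs_pos.mpr hℏ
  -- there exists n with N (p ^ n) = 0
  have ex : ∃ n : ℕ, N (p ^ n) = 0 := by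
    by_contra h
    push_neg at h
    obtain ⟨n, hn⟩ := exists_nat_gt ((2 * N q * N p) / |ℏ|)
    have hpn : 0 < N (p ^ n) := lt_of_le_of_ne (apply_nonneg N _) (Ne.symm (h n))
    have h2 : ((n : ℝ) + 1) * |ℏ| * N (p ^ n) ≤ 2 * N q * N p * N (p ^ n) := by
      refine (est n).trans ?_
      have : N (p ^ (n + 1)) ≤ N p * N (p ^ n) := by
        rw [pow_succ']
        exact hmul _ _
      calc 2 * N q * N (p ^ (n + 1)) ≤ 2 * N q * (N p * N (p ^ n)) := by
            exact mul_le_mul_of_nonneg_left this (by positivity)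
        _ = 2 * N q * N p * N (p ^ n) := by ring
    have h3 : ((n : ℝ) + 1) * |ℏ| ≤ 2 * N q * N p :=
      le_of_mul_le_mul_right (by simpa using h2) hpn
    have h4 : (2 * N q * N p) / |ℏ| < (n : ℝ) + 1 := hn.trans (by linarith)
    rw [div_lt_iff₀ hℏpos] at h4
    linarith
  -- descend to N 1 = 0
  have descend : ∀ n : ℕ, N (p ^ n) = 0 → N (1 : A) = 0 := by
    intro n
    induction n with
    | zero => simpa using id
    | succ n ih =>
      intro hn
      apply ih
      have := est n
      rw [hn, mul_zero] at this
      have h0 : 0 ≤ N (p ^ n) := apply_nonneg N _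
      by_contra hne
      have hp : 0 < N (p ^ n) := lt_of_le_of_ne h0 (Ne.symm hne)
      have hpos : 0 < ((n : ℝ) + 1) * |ℏ| * N (p ^ n) := by positivity
      linarith
  obtain ⟨n, hn⟩ := ex
  have h1 : N (1 : A) = 0 := descend n hn
  intro a
  have : N a ≤ N a * N 1 := by simpa using hmul a 1
  rw [h1, mul_zero] at this
  exact le_antisymm this (apply_nonneg N a)
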